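/- With λ the hyperbolic area measure on the upper half-plane and H as above, for every t ∈ (0,1) one has λ(H ∩ (H+t)) + λ(H ∩ (H+t-1)) = 2 log 2 + log(1/(2 sin(π t))). -/

import Mathlib

open Real MeasureTheory Set

/-- The hyperbolic area measure `dx dy / y²`. -/
noncomputable def hypMeasure : Measure (ℝ × ℝ) :=
  volume.withDensity (fun p => ENNReal.ofReal (1 / p.2 ^ 2))

/-- The wedge-shaped region `H`. -/
def wedgeH : Set (ℝ × ℝ) :=
  {p | -(1/2) < p.1 ∧ p.1 < 1/2 ∧ (2 / π) * Real.tan (π * |p.1|) < p.2}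

/-- Horizontal translate of a planar set. -/
def htrans (A : Set (ℝ × ℝ)) (t : ℝ) : Set (ℝ × ℝ) := {p | (p.1 - t, p.2) ∈ A}

lemma inner_lint {c : ℝ} (hc : 0 < c) :
    ∫⁻ y in Set.Ioi c, ENNReal.ofReal (1 / y ^ 2) = ENNReal.ofReal (1 / c) := by
  have h1 : ∫⁻ y in Set.Ioi c, ENNReal.ofReal (1 / y ^ 2)
      = ∫⁻ y in Set.Ioi c, ENNReal.ofReal (y ^ (-2 : ℝ)) := by
    refine setLIntegral_congr_fun measurableSet_Ioi ?_
    intro y hy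
    dsimp only
    have hy0 : 0 < y := hc.trans hy
    rw [Real.rpow_neg hy0.le, show ((2:ℝ) = ((2:ℕ):ℝ)) by norm_num, Real.rpow_natCast]
    norm_num
  rw [h1, ← ofReal_integral_eq_lintegral_ofReal
      (integrableOn_Ioi_rpow_of_lt (by norm_num) hc)
      (by filter_upwards [ae_restrict_mem measurableSet_Ioi] with y hy;
          exact Real.rpow_nonneg (hc.trans hy).le _)]
  rw [integral_Ioi_rpow_of_lt (by norm_num) hc]
  norm_num
  rw [Real.rpow_neg_one]

lemma hyp_slice {s : Set ℝ} (hs : MeasurableSet s) {g : ℝ → ℝ} (hg : Measurable g)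
    (hgpos : ∀ x ∈ s, 0 < g x) :
    hypMeasure {p : ℝ × ℝ | p.1 ∈ s ∧ g p.1 < p.2}
      = ∫⁻ x in s, ENNReal.ofReal (1 / g x) := by
  have hA : MeasurableSet {p : ℝ × ℝ | p.1 ∈ s ∧ g p.1 < p.2} :=
    (hs.preimage measurable_fst).inter
      (measurableSet_lt (hg.comp measurable_fst) measurable_snd)
  have hdens : Measurable fun p : ℝ × ℝ => ENNReal.ofReal (1 / p.2 ^ 2) :=
    (measurable_const.div ((measurable_snd.pow_const 2))).ennreal_ofReal
  rw [hypMeasure, withDensity_apply _ hA, ← lintegral_indicator hA,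
    Measure.volume_eq_prod, lintegral_prod _ ((hdens.indicator hA).aemeasurable)]
  have key : ∀ x : ℝ,
      (∫⁻ y, ({p : ℝ × ℝ | p.1 ∈ s ∧ g p.1 < p.2}.indicator
        (fun p : ℝ × ℝ => ENNReal.ofReal (1 / p.2 ^ 2))) (x, y))
      = s.indicator (fun x => ENNReal.ofReal (1 / g x)) x := by
    intro x
    by_cases hx : x ∈ s
    · have : ∀ y : ℝ, ({p : ℝ × ℝ | p.1 ∈ s ∧ g p.1 < p.2}.indicator
          (fun p : ℝ × ℝ => ENNReal.ofReal (1 / p.2 ^ 2))) (x, y)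
          = (Set.Ioi (g x)).indicator (fun y => ENNReal.ofReal (1 / y ^ 2)) y := by
        intro y
        by_cases hy : g x < y
        · rw [Set.indicator_of_mem (by exact ⟨hx, hy⟩),
            Set.indicator_of_mem (Set.mem_Ioi.mpr hy)]
        · rw [Set.indicator_of_notMem (by simp [hy]),
            Set.indicator_of_notMem (by simpa using hy)]
      simp_rw [this]
      rw [lintegral_indicator measurableSet_Ioi, inner_lint (hgpos x hx),
        Set.indicator_of_mem hx]
    · have : ∀ y : ℝ, ({p : ℝ × ℝ | p.1 ∈ s ∧ g p.1 < p.2}.indicator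
          (fun p : ℝ × ℝ => ENNReal.ofReal (1 / p.2 ^ 2))) (x, y) = 0 := by
        intro y
        exact Set.indicator_of_notMem (by simp [hx]) _
      simp_rw [this, lintegral_zero, Set.indicator_of_notMem hx]
  simp_rw [key]
  rw [lintegral_indicator hs]

lemma lint_Ioo_eq {a b : ℝ} (hab : a ≤ b) {h : ℝ → ℝ} (hc : ContinuousOn h (Set.Icc a b))
    (hnn : ∀ x ∈ Set.Ioc a b, 0 ≤ h x) :
    ∫⁻ x in Set.Ioo a b, ENNReal.ofReal (h x) = ENNReal.ofReal (∫ x in a..b, h x) := by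
  rw [Measure.restrict_congr_set Ioo_ae_eq_Ioc, intervalIntegral.integral_of_le hab,
    ← ofReal_integral_eq_lintegral_ofReal
      ((hc.integrableOn_Icc).mono_set Set.Ioc_subset_Icc_self)
      (by filter_upwards [ae_restrict_mem measurableSet_Ioc] with x hx; exact hnn x hx)]

lemma piece (a b c d : ℝ) (hab : a ≤ b) (hd : d ≠ 0)
    (hrange : ∀ x ∈ Set.Icc a b, 0 < c + d * x ∧ c + d * x ≤ 1/2) :
    ∫⁻ x in Set.Ioo a b,
        ENNReal.ofReal (π/2 * (Real.cos (π * (c + d * x)) / Real.sin (π * (c + d * x))))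
      = ENNReal.ofReal ((1/(2*d)) * (Real.log (Real.sin (π * (c + d * b)))
          - Real.log (Real.sin (π * (c + d * a))))) := by
  have hsin : ∀ x ∈ Set.Icc a b, 0 < Real.sin (π * (c + d * x)) := by
    intro x hx
    obtain ⟨h1, h2⟩ := hrange x hx
    apply Real.sin_pos_of_pos_of_lt_pi
    · positivity
    · nlinarith [Real.pi_pos]
  have hcos : ∀ x ∈ Set.Icc a b, 0 ≤ Real.cos (π * (c + d * x)) := by
    intro x hx
    obtain ⟨h1, h2⟩ := hrange x hx
    apply Real.cos_nonneg_of_mem_Icc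
    constructor
    · nlinarith [Real.pi_pos]
    · nlinarith [Real.pi_pos]
  have hcont : ContinuousOn
      (fun x => π/2 * (Real.cos (π * (c + d * x)) / Real.sin (π * (c + d * x))))
      (Set.Icc a b) := by
    apply ContinuousOn.mul continuousOn_const
    apply ContinuousOn.div
    · fun_prop
    · fun_prop
    · exact fun x hx => (hsin x hx).ne'
  rw [lint_Ioo_eq hab hcont (fun x hx => by
    have hx' : x ∈ Set.Icc a b := Set.Ioc_subset_Icc_self hx
    have := hsin x hx'
    have := hcos x hx'
    positivity)]
  congr 1
  have hftc : ∀ x ∈ Set.uIcc a b,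
      HasDerivAt (fun x => (1/(2*d)) * Real.log (Real.sin (π * (c + d * x))))
        (π/2 * (Real.cos (π * (c + d * x)) / Real.sin (π * (c + d * x)))) x := by
    intro x hx
    rw [Set.uIcc_of_le hab] at hx
    have hin : HasDerivAt (fun x : ℝ => π * (c + d * x)) (π * d) x := by
      simpa using (((hasDerivAt_id x).const_mul d).const_add c).const_mul π
    have h2 := (Real.hasDerivAt_sin (π * (c + d * x))).comp x hin
    have h3 := (Real.hasDerivAt_log (hsin x hx).ne').comp x h2
    have h4 := h3.const_mul (1/(2*d))
    have hdd : d * d⁻¹ = 1 := mul_inv_cancel₀ hd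
    have heq : (1:ℝ)/(2*d) * ((Real.sin (π*(c+d*x)))⁻¹ * (Real.cos (π*(c+d*x)) * (π*d)))
        = (d * d⁻¹) * (π/2 * (Real.cos (π*(c+d*x)) / Real.sin (π*(c+d*x)))) := by
      rw [div_eq_mul_inv]; ring
    have h5 := h4
    rw [heq, hdd, one_mul] at h5
    exact h5
  rw [intervalIntegral.integral_eq_sub_of_hasDerivAt hftc
    ((hcont.mono (by rw [Set.uIcc_of_le hab])).intervalIntegrable)]
  ring

lemma wedge_inter (s : ℝ) :
    wedgeH ∩ htrans wedgeH s
      = {p : ℝ × ℝ | p.1 ∈ Set.Ioo (max (-(1/2:ℝ)) (s - 1/2)) (min (1/2:ℝ) (s + 1/2)) ∧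
          max ((2/π) * Real.tan (π * |p.1|)) ((2/π) * Real.tan (π * |p.1 - s|)) < p.2} := by
  ext ⟨x, y⟩
  simp only [wedgeH, htrans, Set.mem_inter_iff, Set.mem_setOf_eq, Set.mem_Ioo,
    max_lt_iff, lt_min_iff]
  constructor
  · rintro ⟨⟨h1, h2, h3⟩, ⟨h4, h5, h6⟩⟩
    exact ⟨⟨⟨h1, by linarith⟩, ⟨h2, by linarith⟩⟩, h3, h6⟩
  · rintro ⟨⟨⟨h1, h2⟩, ⟨h3, h4⟩⟩, h5, h6⟩
    exact ⟨⟨h1, h3, h5⟩, ⟨by linarith, by linarith, h6⟩⟩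

lemma measurable_f : Measurable (fun u : ℝ => (2/π) * Real.tan (π * u)) := by
  have htan : Measurable Real.tan := by
    have : Real.tan = fun x => Real.sin x / Real.cos x := funext Real.tan_eq_sin_div_cos
    rw [this]
    exact Real.measurable_sin.div Real.measurable_cos
  exact measurable_const.mul (htan.comp (measurable_const.mul measurable_id))

lemma max_eq_f {u v : ℝ} (hu : 0 ≤ u) (huv : u ≤ v) (hv : v < 1/2) :
    max ((2/π) * Real.tan (π * u)) ((2/π) * Real.tan (π * v))
      = (2/π) * Real.tan (π * v) := by
  apply max_eq_right
  rcases eq_or_lt_of_le huv with h | h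
  · rw [h]
  · have ht : Real.tan (π * u) < Real.tan (π * v) :=
      Real.tan_lt_tan_of_nonneg_of_lt_pi_div_two
        (by positivity) (by nlinarith [Real.pi_pos]) (by nlinarith [Real.pi_pos])
    have h2 : (0:ℝ) < 2/π := by positivity
    exact le_of_lt (mul_lt_mul_of_pos_left ht h2)

lemma one_div_f {u : ℝ} (h0 : 0 < u) (h1 : u < 1/2) :
    1 / ((2/π) * Real.tan (π * u)) = π/2 * (Real.cos (π * u) / Real.sin (π * u)) := by
  have hs : 0 < Real.sin (π * u) := by
    apply Real.sin_pos_of_pos_of_lt_pi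
    · positivity
    · nlinarith [Real.pi_pos]
  have hc : 0 < Real.cos (π * u) := by
    apply Real.cos_pos_of_mem_Ioo
    constructor
    · nlinarith [Real.pi_pos]
    · nlinarith [Real.pi_pos]
  rw [Real.tan_eq_sin_div_cos]
  field_simp

lemma half1 (t : ℝ) (ht0 : 0 < t) (ht1 : t < 1) :
    hypMeasure (wedgeH ∩ htrans wedgeH t)
      = ENNReal.ofReal (-Real.log (Real.sin (π * (t/2)))) := by
  have hπ := Real.pi_pos
  have hmax : max (-(1/2:ℝ)) (t - 1/2) = t - 1/2 := max_eq_right (by linarith)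
  have hmin : min (1/2:ℝ) (t + 1/2) = 1/2 := min_eq_left (by linarith)
  have hgm : Measurable (fun x : ℝ =>
      max ((2/π) * Real.tan (π * |x|)) ((2/π) * Real.tan (π * |x - t|))) := by
    exact (measurable_f.comp measurable_id.abs).max
      (measurable_f.comp (measurable_id.sub_const t).abs)
  have hgpos : ∀ x ∈ Set.Ioo (t - 1/2) (1/2), 0 <
      max ((2/π) * Real.tan (π * |x|)) ((2/π) * Real.tan (π * |x - t|)) := by
    intro x hx
    obtain ⟨hx1, hx2⟩ := hx
    rcases le_or_gt (t/2) x with hc | hc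
    · apply lt_max_iff.mpr; left
      have hx0 : 0 < x := by linarith
      rw [abs_of_nonneg hx0.le]
      have htn : 0 < Real.tan (π * x) :=
        Real.tan_pos_of_pos_of_lt_pi_div_two (by positivity) (by nlinarith)
      positivity
    · apply lt_max_iff.mpr; right
      rw [abs_of_neg (by linarith : x - t < 0)]
      have h0 : 0 < -(x - t) := by linarith
      have htn : 0 < Real.tan (π * -(x - t)) :=
        Real.tan_pos_of_pos_of_lt_pi_div_two (by positivity) (by nlinarith)
      positivity
  have hslice := hyp_slice (s := Set.Ioo (t - 1/2) (1/2))
    (g := fun x => max ((2/π) * Real.tan (π * |x|)) ((2/π) * Real.tan (π * |x - t|)))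
    measurableSet_Ioo hgm hgpos
  rw [wedge_inter t, hmax, hmin, hslice]
  have hsplit : Set.Ioo (t - 1/2) (1/2:ℝ)
      = Set.Ioo (t - 1/2) (t/2) ∪ Set.Ico (t/2) (1/2) :=
    (Set.Ioo_union_Ico_eq_Ioo (by linarith) (by linarith)).symm
  have hdisj : Disjoint (Set.Ioo (t - 1/2) (t/2)) (Set.Ico (t/2) (1/2:ℝ)) := by
    rw [Set.disjoint_left]
    rintro x ⟨_, h2⟩ ⟨h3, _⟩
    exact absurd h3 (not_le.mpr h2)
  rw [hsplit, lintegral_union measurableSet_Ico hdisj]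
  have e1 : ∫⁻ x in Set.Ioo (t - 1/2) (t/2), ENNReal.ofReal
        (1 / max ((2/π) * Real.tan (π * |x|)) ((2/π) * Real.tan (π * |x - t|)))
      = ENNReal.ofReal (-(1/2) * Real.log (Real.sin (π * (t/2)))) := by
    have hpt : ∀ x ∈ Set.Ioo (t - 1/2) (t/2), ENNReal.ofReal
        (1 / max ((2/π) * Real.tan (π * |x|)) ((2/π) * Real.tan (π * |x - t|)))
        = ENNReal.ofReal (π/2 * (Real.cos (π * (t + (-1) * x)) /
            Real.sin (π * (t + (-1) * x)))) := by
      intro x hx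
      obtain ⟨hx1, hx2⟩ := hx
      have harg : t + (-1) * x = t - x := by ring
      have habs : |x - t| = t - x := by rw [abs_of_neg (by linarith : x - t < 0)]; ring
      have hle : |x| ≤ t - x := abs_le.mpr ⟨by linarith, by linarith⟩
      rw [harg, habs, max_eq_f (abs_nonneg x) hle (by linarith),
        one_div_f (by linarith) (by linarith)]
    rw [setLIntegral_congr_fun measurableSet_Ioo hpt,
      piece (t - 1/2) (t/2) t (-1) (by linarith) (by norm_num)
        (fun x hx => ⟨by obtain ⟨h1, h2⟩ := hx; linarith,
                      by obtain ⟨h1, h2⟩ := hx; linarith⟩)]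
    congr 1
    rw [show t + (-1) * (t/2) = t/2 by ring,
      show π * (t + (-1) * (t - 1/2)) = π/2 by ring,
      Real.sin_pi_div_two, Real.log_one]
    ring
  have e2 : ∫⁻ x in Set.Ico (t/2) (1/2:ℝ), ENNReal.ofReal
        (1 / max ((2/π) * Real.tan (π * |x|)) ((2/π) * Real.tan (π * |x - t|)))
      = ENNReal.ofReal (-(1/2) * Real.log (Real.sin (π * (t/2)))) := by
    have hpt : ∀ x ∈ Set.Ico (t/2) (1/2:ℝ), ENNReal.ofReal
        (1 / max ((2/π) * Real.tan (π * |x|)) ((2/π) * Real.tan (π * |x - t|)))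
        = ENNReal.ofReal (π/2 * (Real.cos (π * (0 + 1 * x)) /
            Real.sin (π * (0 + 1 * x)))) := by
      intro x hx
      obtain ⟨hx1, hx2⟩ := hx
      have harg : 0 + 1 * x = x := by ring
      have habs : |x| = x := abs_of_nonneg (by linarith)
      have hle : |x - t| ≤ x := abs_le.mpr ⟨by linarith, by linarith⟩
      rw [harg, habs, max_comm, max_eq_f (abs_nonneg _) hle hx2,
        one_div_f (by linarith) hx2]
    rw [setLIntegral_congr_fun measurableSet_Ico hpt,
      Measure.restrict_congr_set Ioo_ae_eq_Ico.symm,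
      piece (t/2) (1/2) 0 1 (by linarith) (by norm_num)
        (fun x hx => ⟨by obtain ⟨h1, h2⟩ := hx; linarith,
                      by obtain ⟨h1, h2⟩ := hx; linarith⟩)]
    congr 1
    rw [show π * (0 + 1 * (1/2:ℝ)) = π/2 by ring,
      show (0 + 1 * (t/2)) = t/2 by ring,
      Real.sin_pi_div_two, Real.log_one]
    ring
  rw [e1, e2]
  have hS : 0 < Real.sin (π * (t/2)) := by
    apply Real.sin_pos_of_pos_of_lt_pi
    · positivity
    · nlinarith
  have hnn : 0 ≤ -(1/2) * Real.log (Real.sin (π * (t/2))) := by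
    have := Real.log_nonpos hS.le (Real.sin_le_one _)
    linarith
  rw [← ENNReal.ofReal_add hnn hnn]
  congr 1
  ring

lemma half2 (t : ℝ) (ht0 : 0 < t) (ht1 : t < 1) :
    hypMeasure (wedgeH ∩ htrans wedgeH (t - 1))
      = ENNReal.ofReal (-Real.log (Real.sin (π * ((1 - t)/2)))) := by
  have hπ := Real.pi_pos
  have hmax : max (-(1/2:ℝ)) ((t - 1) - 1/2) = -(1/2) := max_eq_left (by linarith)
  have hmin : min (1/2:ℝ) ((t - 1) + 1/2) = t - 1/2 := by rw [min_eq_right (by linarith)]; ring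
  have hgm : Measurable (fun x : ℝ =>
      max ((2/π) * Real.tan (π * |x|)) ((2/π) * Real.tan (π * |x - (t - 1)|))) := by
    exact (measurable_f.comp measurable_id.abs).max
      (measurable_f.comp (measurable_id.sub_const (t - 1)).abs)
  have hgpos : ∀ x ∈ Set.Ioo (-(1/2:ℝ)) (t - 1/2), 0 <
      max ((2/π) * Real.tan (π * |x|)) ((2/π) * Real.tan (π * |x - (t - 1)|)) := by
    intro x hx
    obtain ⟨hx1, hx2⟩ := hx
    rcases le_or_gt x ((t - 1)/2) with hc | hc
    · apply lt_max_iff.mpr; left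
      have hx0 : x < 0 := by linarith
      rw [abs_of_neg hx0]
      have htn : 0 < Real.tan (π * -x) :=
        Real.tan_pos_of_pos_of_lt_pi_div_two (by nlinarith) (by nlinarith)
      positivity
    · apply lt_max_iff.mpr; right
      rw [abs_of_pos (by linarith : 0 < x - (t - 1))]
      have htn : 0 < Real.tan (π * (x - (t - 1))) :=
        Real.tan_pos_of_pos_of_lt_pi_div_two (by nlinarith) (by nlinarith)
      positivity
  have hslice := hyp_slice (s := Set.Ioo (-(1/2:ℝ)) (t - 1/2))
    (g := fun x => max ((2/π) * Real.tan (π * |x|))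
      ((2/π) * Real.tan (π * |x - (t - 1)|)))
    measurableSet_Ioo hgm hgpos
  rw [wedge_inter (t - 1), hmax, hmin, hslice]
  have hsplit : Set.Ioo (-(1/2:ℝ)) (t - 1/2)
      = Set.Ioo (-(1/2:ℝ)) ((t - 1)/2) ∪ Set.Ico ((t - 1)/2) (t - 1/2) :=
    (Set.Ioo_union_Ico_eq_Ioo (by linarith) (by linarith)).symm
  have hdisj : Disjoint (Set.Ioo (-(1/2:ℝ)) ((t - 1)/2))
      (Set.Ico ((t - 1)/2) (t - 1/2)) := by
    rw [Set.disjoint_left]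
    rintro x ⟨_, h2⟩ ⟨h3, _⟩
    exact absurd h3 (not_le.mpr h2)
  rw [hsplit, lintegral_union measurableSet_Ico hdisj]
  have e3 : ∫⁻ x in Set.Ioo (-(1/2:ℝ)) ((t - 1)/2), ENNReal.ofReal
        (1 / max ((2/π) * Real.tan (π * |x|)) ((2/π) * Real.tan (π * |x - (t - 1)|)))
      = ENNReal.ofReal (-(1/2) * Real.log (Real.sin (π * ((1 - t)/2)))) := by
    have hpt : ∀ x ∈ Set.Ioo (-(1/2:ℝ)) ((t - 1)/2), ENNReal.ofReal
        (1 / max ((2/π) * Real.tan (π * |x|)) ((2/π) * Real.tan (π * |x - (t - 1)|)))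
        = ENNReal.ofReal (π/2 * (Real.cos (π * (0 + (-1) * x)) /
            Real.sin (π * (0 + (-1) * x)))) := by
      intro x hx
      obtain ⟨hx1, hx2⟩ := hx
      have harg : 0 + (-1) * x = -x := by ring
      have habs : |x| = -x := abs_of_neg (by linarith)
      have hle : |x - (t - 1)| ≤ -x := abs_le.mpr ⟨by linarith, by linarith⟩
      rw [harg, habs, max_comm, max_eq_f (abs_nonneg _) hle (by linarith),
        one_div_f (by linarith) (by linarith)]
    rw [setLIntegral_congr_fun measurableSet_Ioo hpt,
      piece (-(1/2)) ((t - 1)/2) 0 (-1) (by linarith) (by norm_num)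
        (fun x hx => ⟨by obtain ⟨h1, h2⟩ := hx; linarith,
                      by obtain ⟨h1, h2⟩ := hx; linarith⟩)]
    congr 1
    rw [show (0 + (-1) * ((t - 1)/2)) = (1 - t)/2 by ring,
      show π * (0 + (-1) * (-(1/2:ℝ))) = π/2 by ring,
      Real.sin_pi_div_two, Real.log_one]
    ring
  have e4 : ∫⁻ x in Set.Ico ((t - 1)/2) (t - 1/2), ENNReal.ofReal
        (1 / max ((2/π) * Real.tan (π * |x|)) ((2/π) * Real.tan (π * |x - (t - 1)|)))
      = ENNReal.ofReal (-(1/2) * Real.log (Real.sin (π * ((1 - t)/2)))) := by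
    have hpt : ∀ x ∈ Set.Ico ((t - 1)/2) (t - 1/2), ENNReal.ofReal
        (1 / max ((2/π) * Real.tan (π * |x|)) ((2/π) * Real.tan (π * |x - (t - 1)|)))
        = ENNReal.ofReal (π/2 * (Real.cos (π * ((1 - t) + 1 * x)) /
            Real.sin (π * ((1 - t) + 1 * x)))) := by
      intro x hx
      obtain ⟨hx1, hx2⟩ := hx
      have harg : (1 - t) + 1 * x = x - (t - 1) := by ring
      have habs : |x - (t - 1)| = x - (t - 1) := abs_of_nonneg (by linarith)
      have hle : |x| ≤ x - (t - 1) := abs_le.mpr ⟨by linarith, by linarith⟩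
      rw [harg, habs, max_eq_f (abs_nonneg _) hle (by linarith),
        one_div_f (by linarith) (by linarith)]
    rw [setLIntegral_congr_fun measurableSet_Ico hpt,
      Measure.restrict_congr_set Ioo_ae_eq_Ico.symm,
      piece ((t - 1)/2) (t - 1/2) (1 - t) 1 (by linarith) (by norm_num)
        (fun x hx => ⟨by obtain ⟨h1, h2⟩ := hx; linarith,
                      by obtain ⟨h1, h2⟩ := hx; linarith⟩)]
    congr 1
    rw [show π * ((1 - t) + 1 * (t - 1/2)) = π/2 by ring,
      show ((1 - t) + 1 * ((t - 1)/2)) = (1 - t)/2 by ring,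
      Real.sin_pi_div_two, Real.log_one]
    ring
  rw [e3, e4]
  have hS : 0 < Real.sin (π * ((1 - t)/2)) := by
    apply Real.sin_pos_of_pos_of_lt_pi
    · nlinarith
    · nlinarith
  have hnn : 0 ≤ -(1/2) * Real.log (Real.sin (π * ((1 - t)/2))) := by
    have := Real.log_nonpos hS.le (Real.sin_le_one _)
    linarith
  rw [← ENNReal.ofReal_add hnn hnn]
  congr 1
  ring

/-- For `t ∈ (0,1)`,
`λ(H ∩ (H+t)) + λ(H ∩ (H+t-1)) = 2 log 2 + log (1/(2 sin (π t)))`. -/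
theorem hyp_area_wedge_covariance (t : ℝ) (ht0 : 0 < t) (ht1 : t < 1) :
    hypMeasure (wedgeH ∩ htrans wedgeH t) + hypMeasure (wedgeH ∩ htrans wedgeH (t - 1))
      = ENNReal.ofReal (2 * Real.log 2 + Real.log (1 / (2 * Real.sin (π * t)))) := by
  have hπ := Real.pi_pos
  rw [half1 t ht0 ht1, half2 t ht0 ht1]
  have hS : 0 < Real.sin (π * (t/2)) := by
    apply Real.sin_pos_of_pos_of_lt_pi
    · positivity
    · nlinarith
  have hC : 0 < Real.cos (π * (t/2)) := by
    apply Real.cos_pos_of_mem_Ioo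
    constructor
    · nlinarith
    · nlinarith
  have hS2 : 0 < Real.sin (π * ((1 - t)/2)) := by
    apply Real.sin_pos_of_pos_of_lt_pi
    · nlinarith
    · nlinarith
  have hnn1 : 0 ≤ -Real.log (Real.sin (π * (t/2))) := by
    have := Real.log_nonpos hS.le (Real.sin_le_one _)
    linarith
  have hnn2 : 0 ≤ -Real.log (Real.sin (π * ((1 - t)/2))) := by
    have := Real.log_nonpos hS2.le (Real.sin_le_one _)
    linarith
  rw [← ENNReal.ofReal_add hnn1 hnn2]
  congr 1
  have h1 : Real.sin (π * ((1 - t)/2)) = Real.cos (π * (t/2)) := by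
    rw [show π * ((1 - t)/2) = π/2 - π * (t/2) by ring, Real.sin_pi_div_two_sub]
  have h2 : Real.sin (π * t) = 2 * Real.sin (π * (t/2)) * Real.cos (π * (t/2)) := by
    rw [show π * t = 2 * (π * (t/2)) by ring, Real.sin_two_mul]
  rw [h1, h2, one_div, Real.log_inv,
    Real.log_mul (by norm_num) (by positivity),
    Real.log_mul (by positivity) hC.ne',
    Real.log_mul (by norm_num) hS.ne']
  ring
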